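/- Let S ⊆ (0,∞) be a countable set of positive reals. Then Q_S is ultrahomogeneous: every isometry between two finite subsets of Q_S extends to a surjective isometry of Q_S onto itself. -/

import Mathlib

/-- The ultrametric Urysohn space with distances in `S`, realized as the
set of finitely supported functions from `S` to `ℕ`. -/
def QS (S : Set ℝ) : Type := {x : S → ℕ // (Function.support x).Finite}

/-- The ultrametric on `QS S`: the largest `s ∈ S` at which `x` and `y`
differ, and `0` if `x = y` (the supremum of the empty set of reals is `0`). -/
noncomputable def qdist (S : Set ℝ) (x y : QS S) : ℝ :=
  sSup (Subtype.val '' {s : S | x.1 s ≠ y.1 s})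

/-- `Y ⊆ QS S'` is an isometric copy of `X ⊆ QS S`. -/
def IsCopyIn (S S' : Set ℝ) (X : Set (QS S)) (Y : Set (QS S')) : Prop :=
  ∃ e : X → QS S', Function.Injective e ∧ Set.range e = Y ∧
    ∀ a b : X, qdist S' (e a) (e b) = qdist S a.1 b.1

/-- `X` is an isometric copy of `QS S` inside `QS S`. -/
def IsCopyOfQS (S : Set ℝ) (X : Set (QS S)) : Prop :=
  ∃ e : QS S → QS S, Function.Injective e ∧ Set.range e = X ∧
    ∀ x y, qdist S (e x) (e y) = qdist S x y

/-- The reverse order `>` well-orders `S`: every nonempty subset of `S`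
has a greatest element. -/
def RevWellOrdered (S : Set ℝ) : Prop :=
  ∀ T ⊆ S, T.Nonempty → ∃ m ∈ T, ∀ t ∈ T, t ≤ m

/-- `b` is a metric ball of `QS S` with radius `r ∈ S ∪ {0}`. -/
def IsBall (S : Set ℝ) (b : Set (QS S)) (r : ℝ) : Prop :=
  (r ∈ S ∨ r = 0) ∧ ∃ x : QS S, b = {y | qdist S x y ≤ r}

/-- `r⁻`: the greatest element of `S` below `r` (and `0` if there is none). -/
noncomputable def rminus (S : Set ℝ) (r : ℝ) : ℝ := sSup {t | t ∈ S ∧ t < r}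

/-- `A` is small in the ball `b` of radius `r`. -/
def SmallIn (S : Set ℝ) (A b : Set (QS S)) (r : ℝ) : Prop :=
  (r = 0 ∧ A ∩ b = ∅) ∨
  (0 < r ∧ ∃ F : Finset (QS S), A ∩ b ⊆ ⋃ c ∈ F, {y | qdist S c y ≤ rminus S r})

/-- `χ` admits at most `l` values on copies of `X` inside a copy of `QS S'`,
for every coloring with `k` colors. -/
def BRDbound (S S' : Set ℝ) (X : Set (QS S)) (l : ℕ) : Prop :=
  ∀ k : ℕ, 0 < k → ∀ χ : Set (QS S') → Fin k,
    ∃ Q : Set (QS S'), IsCopyOfQS S' Q ∧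
      (χ '' {Y | IsCopyIn S S' X Y ∧ Y ⊆ Q}).ncard ≤ l

/-- `X ⊆ QS S` has big Ramsey degree `l` in `U_{S'}`. -/
def HasBigRamseyDegree (S S' : Set ℝ) (X : Set (QS S)) (l : ℕ) : Prop :=
  IsLeast {m : ℕ | 0 < m ∧ BRDbound S S' X m} l

namespace Stmt9Aux

/-- Any finite "two-way injective" set of pairs of naturals extends to a
permutation of `ℕ` fixing every number not appearing in the set. -/
lemma exists_perm_extend (G : Finset (ℕ × ℕ))
    (h : ∀ p ∈ G, ∀ q ∈ G, (p.1 = q.1 ↔ p.2 = q.2)) :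
    ∃ σ : Equiv.Perm ℕ, (∀ p ∈ G, σ p.1 = p.2) ∧
      ∀ n : ℕ, (∀ p ∈ G, p.1 ≠ n ∧ p.2 ≠ n) → σ n = n := by
  classical
  induction G using Finset.induction_on with
  | empty => exact ⟨1, by simp, by simp⟩
  | @insert a s ha ih =>
    obtain ⟨σ', hσ1, hσ2⟩ := ih (fun p hp q hq =>
      h p (Finset.mem_insert_of_mem hp) q (Finset.mem_insert_of_mem hq))
    have hfst : ∀ p ∈ s, p.1 ≠ a.1 := by
      intro p hp hpa
      have : p.2 = a.2 :=
        (h p (Finset.mem_insert_of_mem hp) a (Finset.mem_insert_self a s)).1 hpa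
      exact ha (by rwa [show p = a from Prod.ext hpa this] at hp)
    have hsnd : ∀ p ∈ s, p.2 ≠ a.2 := by
      intro p hp hpa
      have : p.1 = a.1 :=
        (h p (Finset.mem_insert_of_mem hp) a (Finset.mem_insert_self a s)).2 hpa
      exact ha (by rwa [show p = a from Prod.ext this hpa] at hp)
    refine ⟨(Equiv.swap (σ' a.1) a.2) * σ', ?_, ?_⟩
    · intro p hp
      rcases Finset.mem_insert.1 hp with rfl | hp
      · simp [Equiv.swap_apply_left]
      · have h1 : σ' p.1 = p.2 := hσ1 p hp
        have h2 : p.2 ≠ σ' a.1 := by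
          intro he
          exact hfst p hp (σ'.injective (h1.trans he))
        simp only [Equiv.Perm.mul_apply, h1]
        exact Equiv.swap_apply_of_ne_of_ne h2 (hsnd p hp)
    · intro n hn
      have hna : a.1 ≠ n ∧ a.2 ≠ n := hn a (Finset.mem_insert_self a s)
      have h1 : σ' n = n := hσ2 n (fun p hp => hn p (Finset.mem_insert_of_mem hp))
      simp only [Equiv.Perm.mul_apply, h1]
      refine Equiv.swap_apply_of_ne_of_ne ?_ (Ne.symm hna.2)
      intro he
      exact hna.1 (σ'.injective (by rw [h1, he]))

variable {S : Set ℝ}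

lemma diffFinite (x y : QS S) : (Subtype.val '' {s : S | x.1 s ≠ y.1 s}).Finite := by
  apply Set.Finite.subset (Set.Finite.image Subtype.val (x.2.union y.2))
  rintro r ⟨s, hs, rfl⟩
  refine ⟨s, ?_, rfl⟩
  by_contra hc
  simp only [Set.mem_union, Function.mem_support, not_or, not_not] at hc
  exact hs (hc.1.trans hc.2.symm)

lemma qdist_self (x : QS S) : qdist S x x = 0 := by
  have : {s : S | x.1 s ≠ x.1 s} = ∅ := by ext s; simp
  simp [qdist, this, Real.sSup_empty]

lemma le_qdist {x y : QS S} {s : S} (h : x.1 s ≠ y.1 s) : s.1 ≤ qdist S x y :=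
  le_csSup (diffFinite x y).bddAbove ⟨s, h, rfl⟩

lemma qdist_le {x y : QS S} {r : ℝ} (hr : 0 ≤ r)
    (h : ∀ s : S, r < s.1 → x.1 s = y.1 s) : qdist S x y ≤ r := by
  refine Real.sSup_le ?_ hr
  rintro v ⟨s, hs, rfl⟩
  by_contra hc
  exact hs (h s (not_le.1 hc))

lemma eq_of_qdist_le {x y : QS S} {r : ℝ} (h : qdist S x y ≤ r) {s : S}
    (hs : r < s.1) : x.1 s = y.1 s := by
  by_contra hc
  exact absurd (le_qdist hc) (not_le.2 (lt_of_le_of_lt h hs))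

lemma ne_iff {x y : QS S} : x ≠ y ↔ ∃ s : S, x.1 s ≠ y.1 s := by
  rw [← not_iff_not]
  push_neg
  constructor
  · rintro rfl; intro s; rfl
  · intro h; exact Subtype.ext (funext h)

lemma exists_max {x y : QS S} (h : x ≠ y) :
    ∃ s : S, x.1 s ≠ y.1 s ∧ s.1 = qdist S x y := by
  obtain ⟨s0, hs0⟩ := ne_iff.1 h
  have hne : (Subtype.val '' {s : S | x.1 s ≠ y.1 s}).Nonempty := ⟨s0, s0, hs0, rfl⟩
  obtain ⟨s, hs, hv⟩ := hne.csSup_mem (diffFinite x y)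
  exact ⟨s, hs, hv⟩

lemma qdist_pos (hpos : S ⊆ Set.Ioi 0) {x y : QS S} (h : x ≠ y) : 0 < qdist S x y := by
  obtain ⟨s, _, hv⟩ := exists_max h
  exact hv ▸ hpos s.2

lemma qdist_lt (hpos : S ⊆ Set.Ioi 0) {x y : QS S} {s : S}
    (h : ∀ t : S, s.1 ≤ t.1 → x.1 t = y.1 t) : qdist S x y < s.1 := by
  by_cases hxy : x = y
  · subst hxy; rw [qdist_self]; exact hpos s.2
  · obtain ⟨t, ht, hv⟩ := exists_max hxy
    rw [← hv]
    by_contra hc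
    exact ht (h t (not_lt.1 hc))

lemma qdist_lt_of (hpos : S ⊆ Set.Ioi 0) {x y : QS S} {s : S}
    (h1 : qdist S x y ≤ s.1) (h2 : x.1 s = y.1 s) : qdist S x y < s.1 := by
  refine qdist_lt hpos (fun t ht => ?_)
  rcases eq_or_lt_of_le ht with he | hlt
  · have : s = t := Subtype.ext he
    exact this ▸ h2
  · exact eq_of_qdist_le h1 hlt

/-- the tail of `x` above `s`. -/
noncomputable def qtail (s : S) (x : S → ℕ) : S → ℕ :=
  fun t => if s.1 < t.1 then x t else 0

lemma qtail_eq {s : S} {x y : S → ℕ} (h : ∀ t : S, s.1 < t.1 → x t = y t) :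
    qtail s x = qtail s y := by
  funext t
  unfold qtail
  by_cases ht : s.1 < t.1
  · rw [if_pos ht, if_pos ht, h t ht]
  · rw [if_neg ht, if_neg ht]

lemma qtail_eq' {s : S} {x y : S → ℕ} (h : qtail s x = qtail s y) {t : S}
    (ht : s.1 < t.1) : x t = y t := by
  have := congrFun h t
  unfold qtail at this
  rwa [if_pos ht, if_pos ht] at this

lemma qtail_iff (hpos : S ⊆ Set.Ioi 0) {x y : QS S} (s : S) :
    qtail s x.1 = qtail s y.1 ↔ qdist S x y ≤ s.1 := by
  constructor
  · intro h
    exact qdist_le (le_of_lt (hpos s.2)) (fun t ht => qtail_eq' h ht)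
  · intro h
    exact qtail_eq (fun t ht => eq_of_qdist_le h ht)

end Stmt9Aux

open Stmt9Aux in
/-- `Q_S` is ultrahomogeneous: every isometry between two
finite subsets of `Q_S` extends to a surjective self-isometry of `Q_S`. -/
theorem stmt9 (S : Set ℝ) (hpos : S ⊆ Set.Ioi 0) (hcount : S.Countable)
    (F : Set (QS S)) (hF : F.Finite) (φ : F → QS S)
    (hφ : ∀ a b : F, qdist S (φ a) (φ b) = qdist S a.1 b.1) :
    ∃ Φ : QS S ≃ QS S, (∀ x y : QS S, qdist S (Φ x) (Φ y) = qdist S x y) ∧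
      ∀ a : F, Φ a.1 = φ a := by
  classical
  haveI : Finite ↥F := hF.to_subtype
  -- two-way injectivity of the pointwise correspondence
  have hkey : ∀ (j k : F) (s : S), qtail s j.1.1 = qtail s k.1.1 →
      (j.1.1 s = k.1.1 s ↔ (φ j).1 s = (φ k).1 s) := by
    intro j k s hjk
    have hd : qdist S j.1 k.1 ≤ s.1 := (qtail_iff hpos s).1 hjk
    have hd' : qdist S (φ j) (φ k) ≤ s.1 := by rw [hφ]; exact hd
    constructor
    · intro he
      have hlt : qdist S (φ j) (φ k) < s.1 := by
        rw [hφ]; exact qdist_lt_of hpos hd he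
      exact eq_of_qdist_le (le_refl _) hlt
    · intro he
      have hlt : qdist S j.1 k.1 < s.1 := by
        rw [← hφ]; exact qdist_lt_of hpos hd' he
      exact eq_of_qdist_le (le_refl _) hlt
  -- b-tails determine a-tails
  have hbtail : ∀ (j k : F) (s : S), qtail s (φ j).1 = qtail s (φ k).1 →
      qtail s j.1.1 = qtail s k.1.1 := by
    intro j k s h
    refine qtail_eq (fun t ht => eq_of_qdist_le ?_ ht)
    rw [← hφ]
    exact (qtail_iff hpos s).1 h
  -- choose the level permutations σ
  have hσex : ∀ (s : S) (u : S → ℕ), ∃ σ : Equiv.Perm ℕ,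
      (∀ j : F, qtail s j.1.1 = u → σ (j.1.1 s) = (φ j).1 s) ∧
      (∀ n : ℕ, (∀ j : F, qtail s j.1.1 = u → j.1.1 s ≠ n ∧ (φ j).1 s ≠ n) →
        σ n = n) := by
    intro s u
    have hGfin : {p : ℕ × ℕ | ∃ j : F, qtail s j.1.1 = u ∧
        p = (j.1.1 s, (φ j).1 s)}.Finite := by
      apply Set.Finite.subset (Set.finite_range (fun j : F => (j.1.1 s, (φ j).1 s)))
      rintro p ⟨j, _, rfl⟩
      exact ⟨j, rfl⟩
    have hcond : ∀ p ∈ hGfin.toFinset, ∀ q ∈ hGfin.toFinset, (p.1 = q.1 ↔ p.2 = q.2) := by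
      intro p hp q hq
      obtain ⟨j, hj, rfl⟩ := (Set.Finite.mem_toFinset _).1 hp
      obtain ⟨k, hk, rfl⟩ := (Set.Finite.mem_toFinset _).1 hq
      exact hkey j k s (hj.trans hk.symm)
    obtain ⟨σ, h1, h2⟩ := exists_perm_extend hGfin.toFinset hcond
    refine ⟨σ, ?_, ?_⟩
    · intro j hj
      exact h1 (j.1.1 s, (φ j).1 s) ((Set.Finite.mem_toFinset _).2 ⟨j, hj, rfl⟩)
    · intro n hn
      refine h2 n (fun p hp => ?_)
      obtain ⟨j, hj, rfl⟩ := (Set.Finite.mem_toFinset _).1 hp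
      exact hn j hj
  choose σf hσ1 hσ2 using hσex
  -- choose the inverse level permutations τ
  have hτex : ∀ (s : S) (u : S → ℕ), ∃ τ : Equiv.Perm ℕ,
      (∀ j : F, qtail s (φ j).1 = u → τ = (σf s (qtail s j.1.1))⁻¹) ∧
      ((∀ j : F, qtail s (φ j).1 ≠ u) → τ = 1) := by
    intro s u
    by_cases hex : ∃ j : F, qtail s (φ j).1 = u
    · obtain ⟨j0, hj0⟩ := hex
      refine ⟨(σf s (qtail s j0.1.1))⁻¹, ?_, ?_⟩
      · intro j hj
        rw [hbtail j j0 s (hj.trans hj0.symm)]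
      · intro hno
        exact absurd hj0 (hno j0)
    · exact ⟨1, fun j hj => absurd ⟨j, hj⟩ hex, fun _ => rfl⟩
  choose τf hτ1 hτ2 using hτex
  -- the (finite) set of relevant coordinates
  set J : Set S := ⋃ j : F, (Function.support j.1.1 ∪ Function.support (φ j).1)
    with hJdef
  have hJfin : J.Finite := Set.finite_iUnion fun j => (j.1.2.union (φ j).2)
  have hzJ : ∀ (s : S), s ∉ J → ∀ j : F, j.1.1 s = 0 ∧ (φ j).1 s = 0 := by
    intro s hs j
    constructor
    · by_contra hc
      exact hs (Set.mem_iUnion.2 ⟨j, Or.inl hc⟩)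
    · by_contra hc
      exact hs (Set.mem_iUnion.2 ⟨j, Or.inr hc⟩)
  have hσ0 : ∀ (s : S), s ∉ J → ∀ u, σf s u 0 = 0 := by
    intro s hs u
    by_cases hex : ∃ j : F, qtail s j.1.1 = u
    · obtain ⟨j, hj⟩ := hex
      have := hσ1 s u j hj
      rwa [(hzJ s hs j).1, (hzJ s hs j).2] at this
    · exact hσ2 s u 0 (fun j hj => absurd ⟨j, hj⟩ hex)
  have hτ0 : ∀ (s : S), s ∉ J → ∀ u, τf s u 0 = 0 := by
    intro s hs u
    by_cases hex : ∃ j : F, qtail s (φ j).1 = u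
    · obtain ⟨j, hj⟩ := hex
      rw [hτ1 s u j hj]
      have h0 : σf s (qtail s j.1.1) 0 = 0 := hσ0 s hs _
      exact (Equiv.symm_apply_eq _).2 h0.symm
    · rw [hτ2 s u (fun j => (not_exists.1 hex j))]
      rfl
  -- generic support bound
  have hsupp : ∀ (ρ : (s : S) → (S → ℕ) → Equiv.Perm ℕ),
      (∀ s ∉ J, ∀ u, ρ s u 0 = 0) → ∀ x : QS S,
      (Function.support fun s => ρ s (qtail s x.1) (x.1 s)).Finite := by
    intro ρ h0 x
    apply Set.Finite.subset (x.2.union hJfin)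
    intro s hs
    rw [Function.mem_support] at hs
    by_cases hx : x.1 s = 0
    · right
      by_contra hJ
      exact hs (by rw [hx]; exact h0 s hJ _)
    · exact Or.inl hx
  let Φ0 : QS S → QS S := fun x => ⟨fun s => σf s (qtail s x.1) (x.1 s), hsupp σf hσ0 x⟩
  let Ψ0 : QS S → QS S := fun x => ⟨fun s => τf s (qtail s x.1) (x.1 s), hsupp τf hτ0 x⟩
  have hΦ0 : ∀ x s, (Φ0 x).1 s = σf s (qtail s x.1) (x.1 s) := fun x s => rfl
  have hΨ0 : ∀ x s, (Ψ0 x).1 s = τf s (qtail s x.1) (x.1 s) := fun x s => rfl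
  -- generic distance preservation
  have dp : ∀ (ρ : (s : S) → (S → ℕ) → Equiv.Perm ℕ) (g : QS S → QS S),
      (∀ x s, (g x).1 s = ρ s (qtail s x.1) (x.1 s)) →
      ∀ x y, qdist S (g x) (g y) = qdist S x y := by
    intro ρ g hg x y
    by_cases hxy : x = y
    · subst hxy; rw [qdist_self, qdist_self]
    · obtain ⟨t0, ht0, hv⟩ := exists_max hxy
      have hle : qdist S x y ≤ t0.1 := le_of_eq hv.symm
      have htail : qtail t0 x.1 = qtail t0 y.1 :=
        qtail_eq (fun t ht => eq_of_qdist_le hle ht)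
      have hgne : (g x).1 t0 ≠ (g y).1 t0 := by
        rw [hg, hg, htail]
        exact fun he => ht0 ((ρ t0 (qtail t0 y.1)).injective he)
      refine le_antisymm ?_ ?_
      · rw [← hv]
        refine qdist_le (le_of_lt (hpos t0.2)) (fun s hs => ?_)
        rw [hg, hg]
        have h1 : x.1 s = y.1 s := eq_of_qdist_le hle hs
        have h2 : qtail s x.1 = qtail s y.1 :=
          qtail_eq (fun t ht => eq_of_qdist_le hle (hs.trans ht))
        rw [h1, h2]
      · rw [← hv]
        exact le_qdist hgne
  -- Φ0 extends φ
  have hext : ∀ a : F, Φ0 a.1 = φ a := by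
    intro a
    apply Subtype.ext
    funext s
    exact (hΦ0 a.1 s).trans (hσ1 s (qtail s a.1.1) a rfl)
  -- tail compatibility on copies of elements of F
  have tailB : ∀ (x : QS S) (j : F) (s : S), qtail s x.1 = qtail s j.1.1 →
      qtail s (Φ0 x).1 = qtail s (φ j).1 := by
    intro x j s h
    refine qtail_eq (fun t ht => ?_)
    rw [hΦ0]
    have h1 : x.1 t = j.1.1 t := qtail_eq' h ht
    have h2 : qtail t x.1 = qtail t j.1.1 :=
      qtail_eq (fun r hr => qtail_eq' h (ht.trans hr))
    rw [h1, h2]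
    exact hσ1 t _ j rfl
  -- if the image tail matches some φ j, the source tail matches j
  have notail : ∀ (x : QS S) (s : S) (j : F),
      qtail s (Φ0 x).1 = qtail s (φ j).1 → qtail s x.1 = qtail s j.1.1 := by
    intro x s j h
    by_contra hc
    have hne : ∃ t : S, s.1 < t.1 ∧ x.1 t ≠ j.1.1 t := by
      by_contra hall
      push_neg at hall
      exact hc (qtail_eq hall)
    obtain ⟨t1, ht1, hne1⟩ := hne
    have hD : (Subtype.val '' {t : S | s.1 < t.1 ∧ x.1 t ≠ j.1.1 t}).Finite := by
      apply Set.Finite.subset (diffFinite x j.1)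
      rintro r ⟨t, ht, rfl⟩
      exact ⟨t, ht.2, rfl⟩
    have hDne : (Subtype.val '' {t : S | s.1 < t.1 ∧ x.1 t ≠ j.1.1 t}).Nonempty :=
      ⟨t1, t1, ⟨ht1, hne1⟩, rfl⟩
    obtain ⟨t0, ht0, hv0⟩ := hDne.csSup_mem hD
    have hmax : ∀ t : S, s.1 < t.1 → x.1 t ≠ j.1.1 t → t.1 ≤ t0.1 := by
      intro t h1 h2
      rw [hv0]
      exact le_csSup hD.bddAbove ⟨t, ⟨h1, h2⟩, rfl⟩
    have htail0 : qtail t0 x.1 = qtail t0 j.1.1 := by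
      refine qtail_eq (fun t ht => ?_)
      by_contra hne2
      exact absurd (hmax t (ht0.1.trans ht) hne2) (not_le.2 ht)
    have h1 : (Φ0 x).1 t0 = σf t0 (qtail t0 j.1.1) (x.1 t0) := by
      rw [hΦ0, htail0]
    have h2 : (φ j).1 t0 = σf t0 (qtail t0 j.1.1) (j.1.1 t0) := (hσ1 t0 _ j rfl).symm
    have h3 : (Φ0 x).1 t0 = (φ j).1 t0 := qtail_eq' h ht0.1
    exact ht0.2 ((σf t0 (qtail t0 j.1.1)).injective (by rw [← h1, ← h2, h3]))
  -- left inverse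
  have hli : ∀ x, Ψ0 (Φ0 x) = x := by
    intro x
    apply Subtype.ext
    funext s
    rw [hΨ0]
    by_cases hex : ∃ j : F, qtail s x.1 = qtail s j.1.1
    · obtain ⟨j, hj⟩ := hex
      have ht : qtail s (Φ0 x).1 = qtail s (φ j).1 := tailB x j s hj
      rw [hτ1 s _ j ht.symm, hΦ0, hj]
      exact Equiv.symm_apply_apply _ _
    · push_neg at hex
      rw [hτ2 s _ (fun j hj => hex j (notail x s j hj.symm))]
      rw [hΦ0]
      have : σf s (qtail s x.1) (x.1 s) = x.1 s :=
        hσ2 s _ (x.1 s) (fun j hj => absurd hj.symm (hex j))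
      simpa using this
  -- Ψ0 is injective (it is distance preserving)
  have hdpΨ := dp τf Ψ0 (fun x s => rfl)
  have hinjΨ : Function.Injective Ψ0 := by
    intro a b h
    by_contra hne
    have h1 := qdist_pos hpos hne
    rw [← hdpΨ a b, h, qdist_self] at h1
    exact lt_irrefl 0 h1
  have hri : ∀ y, Φ0 (Ψ0 y) = y := fun y => hinjΨ (hli (Ψ0 y))
  exact ⟨⟨Φ0, Ψ0, hli, hri⟩, dp σf Φ0 (fun x s => rfl), hext⟩
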